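/- Let G be a locally compact group, (V, π) a Banach G-module, and b : G → V a measurable, locally integrable function satisfying the cocycle identity b(gh) = π(g)b(h) + b(g). Then b is continuous. -/

import Mathlib

open MeasureTheory Pointwise Filter

/-- Multiplying a locally integrable function by a continuous compactly supported scalar
function yields an integrable function (version without `T2Space`). -/
theorem aux_integrable_smul {X E : Type*} [TopologicalSpace X] [MeasurableSpace X]
    [OpensMeasurableSpace X] [NormedAddCommGroup E] [NormedSpace ℝ E] {μ : Measure X}
    {f : X → E} (hf : LocallyIntegrable f μ) {g : X → ℝ} (hg : Continuous g)
    (h'g : HasCompactSupport g) : Integrable (fun x ↦ g x • f x) μ := by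
  have hK : IsCompact (tsupport g) := h'g
  have heq : (tsupport g).indicator (fun x ↦ g x • f x) = fun x ↦ g x • f x := by
    apply Set.indicator_eq_self.2
    apply Function.support_subset_iff'.2
    intro x hx
    simp [image_eq_zero_of_notMem_tsupport hx]
  rw [← heq, Set.indicator_smul]
  apply Integrable.smul_of_top_right
  · rw [integrable_indicator_iff (isClosed_tsupport g).measurableSet]
    exact hf.integrableOn_isCompact hK
  · exact hg.memLp_top_of_hasCompactSupport h'g μ

/-- a measurable, locally integrable 1-cocycle on a locally compact group with
values in a continuous Banach module is continuous. -/
theorem stmt9 {G V : Type*} [Group G] [TopologicalSpace G] [IsTopologicalGroup G]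
    [LocallyCompactSpace G] [MeasurableSpace G] [BorelSpace G]
    [NormedAddCommGroup V] [NormedSpace ℝ V] [CompleteSpace V]
    (μ : Measure G) [μ.IsHaarMeasure]
    (ρ : G →* (V →L[ℝ] V)) (hcont : ∀ v : V, Continuous fun g => ρ g v)
    (b : G → V) (hb : LocallyIntegrable b μ)
    (hcoc : ∀ g h : G, b (g * h) = ρ g (b h) + b g) :
    Continuous b := by
  -- a continuous compactly supported bump function equal to 1 at the identity
  obtain ⟨φ, hφ1, -, hφc, hφ01⟩ :=
    exists_continuous_one_zero_of_isCompact (isCompact_singleton (x := (1 : G)))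
      isClosed_empty (Set.disjoint_empty _)
  have hφcont : Continuous φ := φ.continuous
  have hφnn : ∀ x, 0 ≤ φ x := fun x => (hφ01 x).1
  have hφle : ∀ x, φ x ≤ 1 := fun x => (hφ01 x).2
  -- mass of the bump function
  set c : ℝ := ∫ x, φ x ∂μ with hc_def
  have hφint : Integrable φ μ := hφcont.integrable_of_hasCompactSupport hφc
  have hcpos : 0 < c := by
    rw [hc_def, integral_pos_iff_support_of_nonneg hφnn hφint]
    have hopen : IsOpen {x : G | 0 < φ x} := isOpen_lt continuous_const hφcont
    have h1 : (1 : G) ∈ {x : G | 0 < φ x} := by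
      have : φ 1 = 1 := hφ1 rfl
      simp [Set.mem_setOf_eq, this]
    have hsub : {x : G | 0 < φ x} ⊆ Function.support φ := fun x hx => ne_of_gt hx
    exact lt_of_lt_of_le (hopen.measure_pos μ ⟨1, h1⟩) (measure_mono hsub)
  -- integrability of φ • b
  have hφb : Integrable (fun h => φ h • b h) μ := aux_integrable_smul hb hφcont hφc
  set v : V := ∫ h, φ h • b h ∂μ with hv_def
  -- the smoothed function
  set F : G → V := fun g => ∫ k, φ (g⁻¹ * k) • b k ∂μ with hF_def
  -- key identity : F g = ρ g v + c • b g
  have key : ∀ g : G, F g = ρ g v + c • b g := by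
    intro g
    have hmp : MeasurePreserving (fun h : G => g * h) μ μ := measurePreserving_mul_left μ g
    have hemb : MeasurableEmbedding (fun h : G => g * h) :=
      (MeasurableEquiv.mulLeft g).measurableEmbedding
    have h1 : F g = ∫ h, φ (g⁻¹ * (g * h)) • b (g * h) ∂μ :=
      (hmp.integral_comp hemb (fun k => φ (g⁻¹ * k) • b k)).symm
    have h2 : (fun h => φ (g⁻¹ * (g * h)) • b (g * h))
        = fun h => φ h • (ρ g) (b h) + φ h • b g := by
      funext h
      rw [inv_mul_cancel_left, hcoc g h, smul_add]
    have hint1 : Integrable (fun h => φ h • (ρ g) (b h)) μ := by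
      have : (fun h => φ h • (ρ g) (b h)) = fun h => (ρ g) (φ h • b h) := by
        funext h; exact ((ρ g).map_smul (φ h) (b h)).symm
      rw [this]
      exact (ρ g).integrable_comp hφb
    have hint2 : Integrable (fun h : G => φ h • b g) μ := hφint.smul_const (b g)
    have h3 : ∫ h, φ h • (ρ g) (b h) ∂μ = (ρ g) v := by
      rw [hv_def, ← (ρ g).integral_comp_comm hφb]
      congr 1
      funext h
      exact ((ρ g).map_smul (φ h) (b h)).symm
    have h4 : ∫ h, φ h • b g ∂μ = c • b g := integral_smul_const φ (b g)
    rw [h1, h2, integral_add hint1 hint2, h3, h4]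
  -- integrability of the translated integrands
  have hx_int : ∀ x : G, Integrable (fun k => φ (x⁻¹ * k) • b k) μ := by
    intro x
    have hcφ : Continuous (fun k => φ (x⁻¹ * k)) :=
      hφcont.comp (continuous_const.mul continuous_id)
    have hsupp : HasCompactSupport (fun k => φ (x⁻¹ * k)) := by
      have : (fun k => φ (x⁻¹ * k)) = φ ∘ (Homeomorph.mulLeft x⁻¹) := rfl
      rw [this]
      exact hφc.comp_homeomorph (Homeomorph.mulLeft x⁻¹)
    exact aux_integrable_smul hb hcφ hsupp
  -- uniform continuity of φ
  letI : UniformSpace G := IsTopologicalGroup.rightUniformSpace G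
  have hφuc : UniformContinuous (φ : G → ℝ) :=
    hφc.uniformContinuous_of_continuous hφcont
  have hunif : ∀ δ : ℝ, 0 < δ → ∃ t ∈ nhds (1 : G),
      ∀ y z : G, z / y ∈ t → dist (φ y) (φ z) < δ := by
    intro δ hδ
    have hmem : {p : ℝ × ℝ | dist p.1 p.2 < δ} ∈ uniformity ℝ := Metric.dist_mem_uniformity hδ
    have h2 := hφuc hmem
    rw [show (uniformity G) = Filter.comap (fun p : G × G => p.2 / p.1) (nhds 1) by simp only [div_eq_mul_inv]; rfl] at h2
    obtain ⟨t, ht, hts⟩ := Filter.mem_comap.1 h2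
    refine ⟨t, ht, fun y z h => ?_⟩
    have hmem2 : ((y, z) : G × G) ∈ (fun p : G × G => p.2 / p.1) ⁻¹' t := h
    simpa using hts hmem2
  -- continuity of F
  have hFcont : Continuous F := by
    rw [continuous_iff_continuousAt]
    intro x₀
    obtain ⟨N, hNcomp, hNmem⟩ := exists_compact_mem_nhds x₀
    set K' : Set G := closure (N * tsupport φ) with hK'_def
    have hK'comp : IsCompact K' := (hNcomp.mul hφc).closure
    have hbK' : IntegrableOn b K' μ := hb.integrableOn_isCompact hK'comp
    set M : ℝ := ∫ k in K', ‖b k‖ ∂μ with hM_def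
    have hMnn : 0 ≤ M := integral_nonneg fun k => norm_nonneg _
    have hsupport : ∀ x ∈ N, ∀ k : G, φ (x⁻¹ * k) ≠ 0 → k ∈ K' := by
      intro x hx k hzero
      apply subset_closure
      have hmem : x⁻¹ * k ∈ tsupport φ := subset_tsupport φ hzero
      exact ⟨x, hx, x⁻¹ * k, hmem, by group⟩
    have hx₀N : x₀ ∈ N := mem_of_mem_nhds hNmem
    rw [Metric.continuousAt_iff']
    intro ε hε
    have hδpos : 0 < ε / (M + 1) := div_pos hε (by linarith)
    obtain ⟨t, ht, htprop⟩ := hunif (ε / (M + 1)) hδpos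
    have hpre : {x : G | x⁻¹ * x₀ ∈ t} ∈ nhds x₀ := by
      have hcnt : Continuous fun x : G => x⁻¹ * x₀ :=
        (continuous_id.inv).mul continuous_const
      have : t ∈ nhds (x₀⁻¹ * x₀) := by rwa [inv_mul_cancel]
      exact hcnt.continuousAt.preimage_mem_nhds this
    filter_upwards [hNmem, hpre] with x hxN hxt
    have hdiff : F x - F x₀ = ∫ k, (φ (x⁻¹ * k) - φ (x₀⁻¹ * k)) • b k ∂μ := by
      rw [hF_def]
      rw [← integral_sub (hx_int x) (hx_int x₀)]
      congr 1
      funext k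
      rw [sub_smul]
    have hb_ineq : ∀ k : G, ‖(φ (x⁻¹ * k) - φ (x₀⁻¹ * k)) • b k‖
        ≤ K'.indicator (fun k => (ε / (M + 1)) * ‖b k‖) k := by
      intro k
      by_cases hk : k ∈ K'
      · rw [Set.indicator_of_mem hk, norm_smul]
        apply mul_le_mul_of_nonneg_right _ (norm_nonneg _)
        have hd := htprop (x₀⁻¹ * k) (x⁻¹ * k) (by rwa [show (x⁻¹ * k) / (x₀⁻¹ * k) = x⁻¹ * x₀ by simp [div_eq_mul_inv, mul_inv_rev, mul_assoc]])
        rw [Real.dist_eq, abs_sub_comm] at hd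
        rw [Real.norm_eq_abs]
        exact hd.le
      · rw [Set.indicator_of_notMem hk]
        have h1 : φ (x⁻¹ * k) = 0 := by
          by_contra hc; exact hk (hsupport x hxN k hc)
        have h2 : φ (x₀⁻¹ * k) = 0 := by
          by_contra hc; exact hk (hsupport x₀ hx₀N k hc)
        simp [h1, h2]
    have hbound_int : Integrable (K'.indicator (fun k => (ε / (M + 1)) * ‖b k‖)) μ := by
      rw [integrable_indicator_iff isClosed_closure.measurableSet]
      exact (hbK'.norm).const_mul _
    have hle : ‖F x - F x₀‖ ≤ (ε / (M + 1)) * M := by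
      rw [hdiff]
      calc ‖∫ k, (φ (x⁻¹ * k) - φ (x₀⁻¹ * k)) • b k ∂μ‖
          ≤ ∫ k, K'.indicator (fun k => (ε / (M + 1)) * ‖b k‖) k ∂μ :=
            norm_integral_le_of_norm_le hbound_int (Filter.Eventually.of_forall hb_ineq)
        _ = (ε / (M + 1)) * M := by
            rw [integral_indicator isClosed_closure.measurableSet, integral_const_mul]
    rw [dist_eq_norm]
    calc ‖F x - F x₀‖ ≤ (ε / (M + 1)) * M := hle
      _ < (ε / (M + 1)) * (M + 1) := by
          apply mul_lt_mul_of_pos_left (by linarith) hδpos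
      _ = ε := div_mul_cancel₀ ε (by linarith)
  -- conclude
  have hbeq : b = fun g => c⁻¹ • (F g - ρ g v) := by
    funext g
    rw [key g]
    simp only [add_sub_cancel_left]
    rw [smul_smul, inv_mul_cancel₀ (ne_of_gt hcpos), one_smul]
  rw [hbeq]
  exact (hFcont.sub (hcont v)).const_smul c⁻¹
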